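/- Let Σ_w be a d×d positive semi-definite diagonal matrix with diagonal entries σ_1, …, σ_d, and let Q be any d×d complex matrix. Then for every even N ≥ 2, Re(tr(Σ_w^{2j} (Q − Qᴴ) Σ_w^{N−2j} Qᴴ)) summed over j = 1, …, N/2 − 1 equals (1/2) Σ_{m,n} |Q_{mn} − conj(Q_{nm})|² · (Σ_{j=1}^{N/2−1} σ_m^{2j} σ_n^{N−2j}), and in particular this quantity is nonnegative. -/

import Mathlib

open Matrix

/-- For a PSD diagonal matrix `Σ_w = diag(σ₁, …, σ_d)`, any matrix `Q`, and even `N ≥ 2`: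
`Σ_{j=1}^{N/2−1} Re tr(Σ_w^{2j} (Q − Qᴴ) Σ_w^{N−2j} Qᴴ)
  = (1/2) Σ_{m,n} |Q_{mn} − conj(Q_{nm})|² Σ_{j=1}^{N/2−1} σ_m^{2j} σ_n^{N−2j} ≥ 0`. -/
theorem stmt14 {d : ℕ} (N : ℕ) (hN : 2 ≤ N) (hNe : Even N)
    (σ : Fin d → ℝ) (hσ : ∀ k, 0 ≤ σ k) (Q : Matrix (Fin d) (Fin d) ℂ) :
    (∑ j ∈ Finset.Ico 1 (N / 2),
        (((Matrix.diagonal fun k => ((σ k : ℝ) : ℂ)) ^ (2 * j) * (Q - Qᴴ) *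
            (Matrix.diagonal fun k => ((σ k : ℝ) : ℂ)) ^ (N - 2 * j) * Qᴴ).trace).re
      = (1 / 2 : ℝ) * ∑ m, ∑ n, ‖Q m n - star (Q n m)‖ ^ 2 *
          ∑ j ∈ Finset.Ico 1 (N / 2), σ m ^ (2 * j) * σ n ^ (N - 2 * j)) ∧
    0 ≤ ∑ j ∈ Finset.Ico 1 (N / 2),
        (((Matrix.diagonal fun k => ((σ k : ℝ) : ℂ)) ^ (2 * j) * (Q - Qᴴ) *
            (Matrix.diagonal fun k => ((σ k : ℝ) : ℂ)) ^ (N - 2 * j) * Qᴴ).trace).re := by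
  classical
  set f : Fin d → Fin d → ℝ := fun m n => ((Q m n - star (Q n m)) * star (Q m n)).re with hf
  set S : Fin d → Fin d → ℝ :=
    fun m n => ∑ j ∈ Finset.Ico 1 (N / 2), σ m ^ (2 * j) * σ n ^ (N - 2 * j) with hS
  have hNN : 2 * (N / 2) = N := Nat.two_mul_div_two_of_even hNe
  have hSsymm : ∀ m n, S m n = S n m := by
    intro m n
    simp only [hS]
    refine Finset.sum_nbij' (fun j => N / 2 - j) (fun j => N / 2 - j) ?_ ?_ ?_ ?_ ?_
    · intro j hj; simp only [Finset.mem_Ico] at hj ⊢; omega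
    · intro j hj; simp only [Finset.mem_Ico] at hj ⊢; omega
    · intro j hj; simp only [Finset.mem_Ico] at hj; omega
    · intro j hj; simp only [Finset.mem_Ico] at hj; omega
    · intro j hj
      simp only [Finset.mem_Ico] at hj
      have h1 : 2 * (N / 2 - j) = N - 2 * j := by omega
      rw [h1]
      have h2 : N - (N - 2 * j) = 2 * j := by omega
      rw [h2, mul_comm]
  have hSnonneg : ∀ m n, 0 ≤ S m n := by
    intro m n
    exact Finset.sum_nonneg fun j _ => mul_nonneg (pow_nonneg (hσ m) _) (pow_nonneg (hσ n) _)
  have hD : ∀ p : ℕ, (Matrix.diagonal fun k => ((σ k : ℝ) : ℂ)) ^ p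
      = Matrix.diagonal (fun k => ((σ k ^ p : ℝ) : ℂ)) := by
    intro p
    rw [Matrix.diagonal_pow]
    have h : ((fun k => ((σ k : ℝ) : ℂ)) ^ p) = fun k => ((σ k ^ p : ℝ) : ℂ) := by
      funext k
      simp [Pi.pow_apply]
    rw [h]
  have htr : ∀ j, (((Matrix.diagonal fun k => ((σ k : ℝ) : ℂ)) ^ (2 * j) * (Q - Qᴴ) *
            (Matrix.diagonal fun k => ((σ k : ℝ) : ℂ)) ^ (N - 2 * j) * Qᴴ).trace).re
      = ∑ m, ∑ n, (σ m ^ (2 * j) * σ n ^ (N - 2 * j)) * f m n := by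
    intro j
    rw [hD, hD]
    rw [Matrix.mul_assoc, Matrix.mul_assoc, Matrix.trace_mul_comm]
    simp only [Matrix.trace, Matrix.diag, Matrix.mul_apply, Matrix.diagonal_apply,
      Matrix.conjTranspose_apply, Matrix.sub_apply, ite_mul, mul_ite, zero_mul, mul_zero,
      Finset.sum_ite_eq, Finset.sum_ite_eq', Finset.mem_univ, if_true,
      Finset.mul_sum, Finset.sum_mul]
    rw [Complex.re_sum]
    refine Finset.sum_congr rfl fun m _ => ?_
    rw [Complex.re_sum]
    refine Finset.sum_congr rfl fun n _ => ?_
    simp only [hf, ← Complex.ofReal_pow]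
    simp only [Complex.mul_re, Complex.mul_im, Complex.sub_re, Complex.sub_im, Complex.ofReal_re,
      Complex.ofReal_im, Complex.conj_re, Complex.conj_im, RCLike.star_def]
    ring
  have hT : (∑ j ∈ Finset.Ico 1 (N / 2),
        (((Matrix.diagonal fun k => ((σ k : ℝ) : ℂ)) ^ (2 * j) * (Q - Qᴴ) *
            (Matrix.diagonal fun k => ((σ k : ℝ) : ℂ)) ^ (N - 2 * j) * Qᴴ).trace).re)
      = ∑ m, ∑ n, S m n * f m n := by
    simp only [htr]
    rw [Finset.sum_comm]
    refine Finset.sum_congr rfl fun m _ => ?_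
    rw [Finset.sum_comm]
    refine Finset.sum_congr rfl fun n _ => ?_
    rw [hS, Finset.sum_mul]
  have pair : ∀ a b : ℂ, ((a - star b) * star a).re + ((b - star a) * star b).re
      = ‖a - star b‖ ^ 2 := by
    intro a b
    rw [Complex.sq_norm]
    simp [Complex.normSq_apply, Complex.mul_re, Complex.sub_re, Complex.sub_im,
      Complex.mul_im, Complex.conj_re, Complex.conj_im]
    ring
  have hT2 : (∑ m, ∑ n, S m n * f m n)
      = (1 / 2 : ℝ) * ∑ m, ∑ n, ‖Q m n - star (Q n m)‖ ^ 2 * S m n := by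
    have hswap : (∑ m, ∑ n, S m n * f m n) = ∑ m, ∑ n, S m n * f n m := by
      rw [Finset.sum_comm]
      refine Finset.sum_congr rfl fun m _ => Finset.sum_congr rfl fun n _ => ?_
      rw [hSsymm]
    have h2 : (2 : ℝ) * (∑ m, ∑ n, S m n * f m n)
        = ∑ m, ∑ n, ‖Q m n - star (Q n m)‖ ^ 2 * S m n := by
      rw [two_mul]
      nth_rewrite 2 [hswap]
      rw [← Finset.sum_add_distrib]
      refine Finset.sum_congr rfl fun m _ => ?_
      rw [← Finset.sum_add_distrib]
      refine Finset.sum_congr rfl fun n _ => ?_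
      rw [← mul_add, hf]
      dsimp only
      rw [pair (Q m n) (Q n m), mul_comm]
    linarith
  refine ⟨by rw [hT, hT2], ?_⟩
  rw [hT, hT2]
  have hpos : 0 ≤ ∑ m, ∑ n, ‖Q m n - star (Q n m)‖ ^ 2 * S m n :=
    Finset.sum_nonneg fun m _ => Finset.sum_nonneg fun n _ =>
      mul_nonneg (sq_nonneg _) (hSnonneg m n)
  linarith
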